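/- arXiv:2409.12802 — 2 statements merged into one kernel-verified Lean document; each statement's English description precedes it below -/
import Mathlib

section
/- Let ∅ ≠ I ⊆ 𝓘 and let β ∈ Δ be a root with ht_I(β) = 1 and ht_{I^c}(β) > 0. Then there exists j ∈ I^c ∩ supp(β) with β − α_j ∈ Δ and ht_I(β − α_j) = 1. Consequently there is a chain of roots β = β_1, β_2, …, β_m, all lying in Δ_{I,1}, with m = ht(β), β_t − β_{t+1} ∈ Π_{I^c} for all 1 ≤ t ≤ m−1 (so the chain strictly decreases and terminates at the simple root β_m = α_i, where {i} = I ∩ supp(β)). -/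
open scoped BigOperators

attribute [local instance] Classical.propDecidable

namespace KM

/-- The set of `ℤ≥0`-linear combinations of elements of `S`. -/
def cone {W : Type} [AddCommMonoid W] (S : Set W) : Set W :=
  (AddSubmonoid.closure S : AddSubmonoid W)

/-- Minkowski difference of two sets. -/
def mdiff {W : Type} [Sub W] (A B : Set W) : Set W :=
  {x | ∃ a ∈ A, ∃ b ∈ B, x = a - b}

variable {g : Type} [LieRing g] [LieAlgebra ℂ g]

/-- The `μ`-weight space of a `g`-module `V` with respect to a Cartan subalgebra `H`. -/
def wtSpace (H : LieSubalgebra ℂ g) (V : Type) [AddCommGroup V] [Module ℂ V]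
    [LieRingModule g V] [LieModule ℂ g V] (μ : Module.Dual ℂ H) : Submodule ℂ V where
  carrier := {w | ∀ h : H, ⁅(h : g), w⁆ = μ h • w}
  add_mem' := by
    intro a b ha hb h
    rw [lie_add, ha h, hb h, smul_add]
  zero_mem' := by
    intro h
    rw [lie_zero, smul_zero]
  smul_mem' := by
    intro t w hw h
    rw [lie_smul, hw h, smul_smul, smul_smul, mul_comm]

/-- The set of weights of a `g`-module `V`. -/
def wtSet (H : LieSubalgebra ℂ g) (V : Type) [AddCommGroup V] [Module ℂ V]
    [LieRingModule g V] [LieModule ℂ g V] : Set (Module.Dual ℂ H) :=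
  {μ | wtSpace H V μ ≠ ⊥}

/-- Iterated action `x^n · w` of an element `x : g` on a module vector. -/
def actPow {V : Type} [AddCommGroup V] [LieRingModule g V] (x : g) (n : ℕ) (w : V) : V :=
  (fun u => ⁅x, u⁆)^[n] w

/-- The data of a Kac--Moody Lie algebra `g` attached to a generalized Cartan matrix `A`,
with Cartan subalgebra `H`, simple roots `α`, simple coroots `coroot`, and Chevalley
generators `e`, `f`. -/
structure Data (𝓘 : Type) (g : Type) [LieRing g] [LieAlgebra ℂ g] where
  H : LieSubalgebra ℂ g
  α : 𝓘 → Module.Dual ℂ H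
  coroot : 𝓘 → H
  e : 𝓘 → g
  f : 𝓘 → g
  A : 𝓘 → 𝓘 → ℤ
  pairing_eq : ∀ i j, α i (coroot j) = (A j i : ℂ)
  A_diag : ∀ i, A i i = 2
  A_offdiag : ∀ i j, i ≠ j → A i j ≤ 0
  A_zero_iff : ∀ i j, A i j = 0 ↔ A j i = 0
  indepSimple : LinearIndependent ℂ α
  cartan_abelian : ∀ h h' : H, ⁅(h : g), (h' : g)⁆ = 0
  lie_h_e : ∀ (h : H) (i : 𝓘), ⁅(h : g), e i⁆ = α i h • e i
  lie_h_f : ∀ (h : H) (i : 𝓘), ⁅(h : g), f i⁆ = -(α i h) • f i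
  lie_e_f_same : ∀ i, ⁅e i, f i⁆ = (coroot i : g)
  lie_e_f_ne : ∀ i j, i ≠ j → ⁅e i, f j⁆ = 0
  serre_e : ∀ i j, i ≠ j → ((LieAlgebra.ad ℂ g (e i)) ^ (1 - A i j).toNat) (e j) = 0
  serre_f : ∀ i j, i ≠ j → ((LieAlgebra.ad ℂ g (f i)) ^ (1 - A i j).toNat) (f j) = 0
  generates : LieSubalgebra.lieSpan ℂ g ((H : Set g) ∪ Set.range e ∪ Set.range f) = ⊤
  rootDecomp : (⨆ μ : Module.Dual ℂ H, wtSpace H g μ) = ⊤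
  zeroWtSpace : wtSpace H g (0 : Module.Dual ℂ H) = H.toSubmodule
  root_pm : ∀ μ : Module.Dual ℂ H, μ ≠ 0 → wtSpace H g μ ≠ ⊥ →
      μ ∈ cone (Set.range α) ∨ -μ ∈ cone (Set.range α)

variable {𝓘 : Type}

/-- `V` is a highest weight `g`-module with highest weight `lam` and highest weight
vector `v`; equivalently, `V` is a nonzero quotient of the Verma module `M(lam)`. -/
def IsHW (D : Data 𝓘 g) (V : Type) [AddCommGroup V] [Module ℂ V] [LieRingModule g V]
    [LieModule ℂ g V] (lam : Module.Dual ℂ D.H) (v : V) : Prop :=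
  v ≠ 0 ∧ v ∈ wtSpace D.H V lam ∧ (∀ i : 𝓘, ⁅D.e i, v⁆ = 0) ∧
    LieSubmodule.lieSpan ℂ g {v} = ⊤

/-- `J_λ`, the set of integrable directions of `lam`. -/
def Jlam (D : Data 𝓘 g) (lam : Module.Dual ℂ D.H) : Set 𝓘 :=
  {i | ∃ n : ℕ, lam (D.coroot i) = (n : ℂ)}

/-- `Π_J`, the simple roots indexed by `J`. -/
def PiJ (D : Data 𝓘 g) (J : Set 𝓘) : Set (Module.Dual ℂ D.H) := D.α '' J

/-- The root system `Δ` of `g`. -/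
def roots (D : Data 𝓘 g) : Set (Module.Dual ℂ D.H) :=
  {μ | μ ≠ 0 ∧ wtSpace D.H g μ ≠ ⊥}

/-- The positive roots `Δ⁺`. -/
def posRoots (D : Data 𝓘 g) : Set (Module.Dual ℂ D.H) :=
  roots D ∩ cone (Set.range D.α)

/-- The positive roots `Δ⁺_J` of the parabolic subroot system `Δ_J = Δ ∩ ℤΠ_J`. -/
def posRootsJ (D : Data 𝓘 g) (J : Set 𝓘) : Set (Module.Dual ℂ D.H) :=
  posRoots D ∩ (Submodule.span ℤ (D.α '' J) : Set (Module.Dual ℂ D.H))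

/-- `wt_J V := wt V ∩ (λ − ℤ≥0 Π_J)`. -/
def wtJ (D : Data 𝓘 g) (V : Type) [AddCommGroup V] [Module ℂ V] [LieRingModule g V]
    [LieModule ℂ g V] (lam : Module.Dual ℂ D.H) (J : Set 𝓘) : Set (Module.Dual ℂ D.H) :=
  wtSet D.H V ∩ {μ | ∃ x ∈ cone (PiJ D J), μ = lam - x}

/-- A subset `S` of nodes is independent if its induced Dynkin subdiagram has no edges. -/
def IndepSet (D : Data 𝓘 g) (S : Set 𝓘) : Prop :=
  ∀ i ∈ S, ∀ j ∈ S, i ≠ j → D.α i (D.coroot j) = 0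

/-- `J_V`: the union of all minimal independent subsets `I ⊆ J_λ` with
`λ − Σ_{i∈I} (λ(α_i^∨)+1)α_i ∉ wt V`. -/
def JV (D : Data 𝓘 g) (V : Type) [AddCommGroup V] [Module ℂ V] [LieRingModule g V]
    [LieModule ℂ g V] (lam : Module.Dual ℂ D.H) : Set 𝓘 :=
  {i | ∃ I : Finset 𝓘, (↑I : Set 𝓘) ⊆ Jlam D lam ∧ IndepSet D (↑I : Set 𝓘) ∧
    (lam - ∑ k ∈ I, (lam (D.coroot k) + 1) • D.α k) ∉ wtSet D.H V ∧
    (∀ K : Finset 𝓘, K ⊂ I →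
      (lam - ∑ k ∈ K, (lam (D.coroot k) + 1) • D.α k) ∈ wtSet D.H V) ∧
    i ∈ I}


/-- `γ ∈ Δ_{I,1}`, i.e. `γ` is a root of `I`-height `1`. -/
def InDeltaI1 (D : Data 𝓘 g) [Fintype 𝓘] (I : Set 𝓘) (γ : Module.Dual ℂ D.H) : Prop :=
  γ ∈ roots D ∧ ∃ d : 𝓘 → ℕ, γ = ∑ k, (d k : ℂ) • D.α k ∧
    ∑ k ∈ Finset.univ.filter (fun k => k ∈ I), d k = 1


section Aux

set_option linter.unusedSectionVars false

variable {𝓘 : Type} [Fintype 𝓘] [DecidableEq 𝓘] {g : Type} [LieRing g] [LieAlgebra ℂ g]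

lemma mem_wtSpace (D : Data 𝓘 g) {μ : Module.Dual ℂ D.H} {w : g} :
    w ∈ wtSpace D.H g μ ↔ ∀ h : D.H, ⁅(h : g), w⁆ = μ h • w := Iff.rfl

lemma wt_bracket (D : Data 𝓘 g) {μ ν : Module.Dual ℂ D.H} {u v : g}
    (hu : u ∈ wtSpace D.H g μ) (hv : v ∈ wtSpace D.H g ν) :
    ⁅u, v⁆ ∈ wtSpace D.H g (μ + ν) := by
  intro h
  rw [leibniz_lie, (mem_wtSpace D).1 hu h, (mem_wtSpace D).1 hv h, smul_lie, lie_smul]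
  simp only [LinearMap.add_apply, add_smul]

lemma e_mem_wt (D : Data 𝓘 g) (i : 𝓘) : D.e i ∈ wtSpace D.H g (D.α i) :=
  fun h => D.lie_h_e h i

lemma f_mem_wt (D : Data 𝓘 g) (i : 𝓘) : D.f i ∈ wtSpace D.H g (-(D.α i)) := by
  intro h
  rw [D.lie_h_f h i]
  simp

lemma H_mem_wt (D : Data 𝓘 g) (h' : D.H) : (h' : g) ∈ wtSpace D.H g 0 := by
  intro h
  rw [D.cartan_abelian h h']
  simp

/-- right-normed iterated bracket of `e`'s -/
def eword (D : Data 𝓘 g) : List 𝓘 → g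
  | [] => 0
  | [i] => D.e i
  | i :: j :: l => ⁅D.e i, eword D (j :: l)⁆

/-- right-normed iterated bracket of `f`'s -/
def fword (D : Data 𝓘 g) : List 𝓘 → g
  | [] => 0
  | [i] => D.f i
  | i :: j :: l => ⁅D.f i, fword D (j :: l)⁆

lemma eword_cons (D : Data 𝓘 g) (i : 𝓘) {l : List 𝓘} (hl : l ≠ []) :
    eword D (i :: l) = ⁅D.e i, eword D l⁆ := by
  cases l with
  | nil => exact absurd rfl hl
  | cons j m => rfl

lemma fword_cons (D : Data 𝓘 g) (i : 𝓘) {l : List 𝓘} (hl : l ≠ []) :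
    fword D (i :: l) = ⁅D.f i, fword D l⁆ := by
  cases l with
  | nil => exact absurd rfl hl
  | cons j m => rfl

/-- the weight of a word -/
def lwt (D : Data 𝓘 g) (l : List 𝓘) : Module.Dual ℂ D.H := (l.map D.α).sum

@[simp] lemma lwt_nil (D : Data 𝓘 g) : lwt D ([] : List 𝓘) = 0 := rfl

@[simp] lemma lwt_cons (D : Data 𝓘 g) (i : 𝓘) (l : List 𝓘) :
    lwt D (i :: l) = D.α i + lwt D l := by
  simp [lwt]

lemma eword_mem_wt (D : Data 𝓘 g) : ∀ l : List 𝓘, eword D l ∈ wtSpace D.H g (lwt D l)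
  | [] => by simp [eword]
  | [i] => by simpa [eword] using e_mem_wt D i
  | i :: j :: l => by
    rw [eword_cons D i (by simp), lwt_cons]
    exact wt_bracket D (e_mem_wt D i) (eword_mem_wt D (j :: l))

lemma fword_mem_wt (D : Data 𝓘 g) : ∀ l : List 𝓘, fword D l ∈ wtSpace D.H g (-(lwt D l))
  | [] => by simp [fword]
  | [i] => by simpa [fword] using f_mem_wt D i
  | i :: j :: l => by
    rw [fword_cons D i (by simp), lwt_cons, neg_add]
    exact wt_bracket D (f_mem_wt D i) (fword_mem_wt D (j :: l))

lemma indepWt (D : Data 𝓘 g) (s : Finset (Module.Dual ℂ D.H)) :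
    ∀ (x : Module.Dual ℂ D.H → g), (∀ μ ∈ s, x μ ∈ wtSpace D.H g μ) →
      (∑ μ ∈ s, x μ) = 0 → ∀ μ ∈ s, x μ = 0 := by
  induction s using Finset.induction_on with
  | empty => simp
  | @insert ν s hν ih =>
    intro x hx hsum
    have hs : (∑ μ ∈ s, x μ) = - x ν := by
      rw [Finset.sum_insert hν] at hsum; linear_combination (norm := abel) hsum
    have key : ∀ h : D.H, ∀ μ ∈ s, (μ h - ν h) • x μ = 0 := by
      intro h
      refine ih (fun μ => (μ h - ν h) • x μ) (fun μ hμ => Submodule.smul_mem _ _ (hx μ (Finset.mem_insert_of_mem hμ))) ?_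
      have : ∀ μ ∈ s, (μ h - ν h) • x μ = ⁅(h : g), x μ⁆ - ν h • x μ := by
        intro μ hμ
        rw [(mem_wtSpace D).1 (hx μ (Finset.mem_insert_of_mem hμ)) h, sub_smul]
      rw [Finset.sum_congr rfl this, Finset.sum_sub_distrib]
      have hlie := (map_sum (LieAlgebra.ad ℂ g (h : g)) x s).symm
      simp only [LieAlgebra.ad_apply] at hlie
      rw [hlie, ← Finset.smul_sum, hs, lie_neg, smul_neg,
        (mem_wtSpace D).1 (hx ν (Finset.mem_insert_self ν s)) h]
      abel
    have hzero : ∀ μ ∈ s, x μ = 0 := by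
      intro μ hμs
      have hne : μ ≠ ν := fun e => hν (e ▸ hμs)
      obtain ⟨h, hh⟩ : ∃ h, μ h ≠ ν h := by
        by_contra hall
        push_neg at hall
        exact hne (LinearMap.ext hall)
      rcases smul_eq_zero.1 (key h μ hμs) with h0 | h0
      · exact absurd (sub_eq_zero.1 h0) hh
      · exact h0
    intro μ hμ
    rcases Finset.mem_insert.1 hμ with rfl | hμs
    · have h0 : (∑ μ' ∈ s, x μ') = 0 := Finset.sum_eq_zero hzero
      rw [h0] at hs
      simpa using hs.symm
    · exact hzero μ hμs

@[simp] lemma eword_singleton (D : Data 𝓘 g) (i : 𝓘) : eword D [i] = D.e i := rfl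
@[simp] lemma fword_singleton (D : Data 𝓘 g) (i : 𝓘) : fword D [i] = D.f i := rfl

/-- span of nonempty e-words -/
def Esub (D : Data 𝓘 g) : Submodule ℂ g :=
  Submodule.span ℂ {x | ∃ l : List 𝓘, l ≠ [] ∧ eword D l = x}

/-- span of nonempty f-words -/
def Fsub (D : Data 𝓘 g) : Submodule ℂ g :=
  Submodule.span ℂ {x | ∃ l : List 𝓘, l ≠ [] ∧ fword D l = x}

/-- candidate for the whole algebra -/
def Tsub (D : Data 𝓘 g) : Submodule ℂ g := D.H.toSubmodule ⊔ Esub D ⊔ Fsub D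

lemma eword_mem_Esub (D : Data 𝓘 g) {l : List 𝓘} (hl : l ≠ []) : eword D l ∈ Esub D :=
  Submodule.subset_span ⟨l, hl, rfl⟩

lemma fword_mem_Fsub (D : Data 𝓘 g) {l : List 𝓘} (hl : l ≠ []) : fword D l ∈ Fsub D :=
  Submodule.subset_span ⟨l, hl, rfl⟩

lemma H_le_T (D : Data 𝓘 g) : D.H.toSubmodule ≤ Tsub D :=
  le_trans le_sup_left le_sup_left

lemma E_le_T (D : Data 𝓘 g) : Esub D ≤ Tsub D :=
  le_trans le_sup_right le_sup_left

lemma F_le_T (D : Data 𝓘 g) : Fsub D ≤ Tsub D := le_sup_right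

/-- bracketing on the left by a fixed element, over a span -/
lemma lie_mem_span {u : g} {S : Set g} {P : Submodule ℂ g}
    (hgen : ∀ x ∈ S, ⁅u, x⁆ ∈ P) : ∀ x ∈ Submodule.span ℂ S, ⁅u, x⁆ ∈ P := by
  intro x hx
  induction hx using Submodule.span_induction with
  | mem x h => exact hgen x h
  | zero => rw [lie_zero]; exact P.zero_mem
  | add x y hx hy ihx ihy => rw [lie_add]; exact P.add_mem ihx ihy
  | smul a x hx ih => rw [lie_smul]; exact P.smul_mem a ih

lemma span_lie_mem {u : g} {S : Set g} {P : Submodule ℂ g}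
    (hgen : ∀ x ∈ S, ⁅x, u⁆ ∈ P) : ∀ x ∈ Submodule.span ℂ S, ⁅x, u⁆ ∈ P := by
  intro x hx
  induction hx using Submodule.span_induction with
  | mem x h => exact hgen x h
  | zero => rw [zero_lie]; exact P.zero_mem
  | add x y hx hy ihx ihy => rw [add_lie]; exact P.add_mem ihx ihy
  | smul a x hx ih => rw [smul_lie]; exact P.smul_mem a ih

lemma lie_e_Esub (D : Data 𝓘 g) (i : 𝓘) : ∀ x ∈ Esub D, ⁅D.e i, x⁆ ∈ Esub D := by
  apply lie_mem_span
  rintro x ⟨l, hl, rfl⟩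
  rw [← eword_cons D i hl]
  exact eword_mem_Esub D (by simp)

lemma lie_f_Fsub (D : Data 𝓘 g) (i : 𝓘) : ∀ x ∈ Fsub D, ⁅D.f i, x⁆ ∈ Fsub D := by
  apply lie_mem_span
  rintro x ⟨l, hl, rfl⟩
  rw [← fword_cons D i hl]
  exact fword_mem_Fsub D (by simp)

lemma lie_Hmem_wt (D : Data 𝓘 g) {x : g} {μ : Module.Dual ℂ D.H} (hx : x ∈ wtSpace D.H g μ)
    {a : g} (ha : a ∈ D.H.toSubmodule) : ⁅a, x⁆ = μ ⟨a, ha⟩ • x :=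
  (mem_wtSpace D).1 hx ⟨a, ha⟩

lemma lie_H_Esub (D : Data 𝓘 g) {a : g} (ha : a ∈ D.H.toSubmodule) :
    ∀ x ∈ Esub D, ⁅a, x⁆ ∈ Esub D := by
  apply lie_mem_span
  rintro x ⟨l, hl, rfl⟩
  rw [lie_Hmem_wt D (eword_mem_wt D l) ha]
  exact Submodule.smul_mem _ _ (eword_mem_Esub D hl)

lemma lie_H_Fsub (D : Data 𝓘 g) {a : g} (ha : a ∈ D.H.toSubmodule) :
    ∀ x ∈ Fsub D, ⁅a, x⁆ ∈ Fsub D := by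
  apply lie_mem_span
  rintro x ⟨l, hl, rfl⟩
  rw [lie_Hmem_wt D (fword_mem_wt D l) ha]
  exact Submodule.smul_mem _ _ (fword_mem_Fsub D hl)

lemma lie_wt_H (D : Data 𝓘 g) {x : g} {μ : Module.Dual ℂ D.H} (hx : x ∈ wtSpace D.H g μ)
    {a : g} (ha : a ∈ D.H.toSubmodule) : ⁅x, a⁆ = -(μ ⟨a, ha⟩ • x) := by
  rw [← lie_skew, lie_Hmem_wt D hx ha]

lemma lie_e_H (D : Data 𝓘 g) (i : 𝓘) {a : g} (ha : a ∈ D.H.toSubmodule) :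
    ⁅D.e i, a⁆ ∈ Esub D := by
  rw [lie_wt_H D (e_mem_wt D i) ha]
  exact Submodule.neg_mem _ (Submodule.smul_mem _ _ (eword_mem_Esub D (l := [i]) (by simp)))

lemma lie_f_H (D : Data 𝓘 g) (i : 𝓘) {a : g} (ha : a ∈ D.H.toSubmodule) :
    ⁅D.f i, a⁆ ∈ Fsub D := by
  rw [lie_wt_H D (f_mem_wt D i) ha]
  exact Submodule.neg_mem _ (Submodule.smul_mem _ _ (fword_mem_Fsub D (l := [i]) (by simp)))

lemma lie_f_e_H (D : Data 𝓘 g) (i j : 𝓘) : ⁅D.f i, D.e j⁆ ∈ D.H.toSubmodule := by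
  rw [← lie_skew]
  by_cases h : j = i
  · subst h
    rw [D.lie_e_f_same j]
    exact Submodule.neg_mem _ (D.coroot j).2
  · rw [D.lie_e_f_ne j i h]
    simp

lemma lie_f_eword (D : Data 𝓘 g) (i : 𝓘) :
    ∀ l : List 𝓘, ⁅D.f i, eword D l⁆ ∈ D.H.toSubmodule ⊔ Esub D
  | [] => by simp [eword]
  | [j] => Submodule.mem_sup_left (lie_f_e_H D i j)
  | j :: j' :: l' => by
    rw [eword_cons D j (by simp), leibniz_lie]
    apply Submodule.add_mem
    · have hh := lie_f_e_H D i j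
      rw [lie_Hmem_wt D (eword_mem_wt D (j' :: l')) hh]
      exact Submodule.mem_sup_right
        (Submodule.smul_mem _ _ (eword_mem_Esub D (by simp)))
    · have hrec := lie_f_eword D i (j' :: l')
      obtain ⟨a, ha, b, hb, hab⟩ := Submodule.mem_sup.1 hrec
      rw [← hab, lie_add]
      exact Submodule.add_mem _
        (Submodule.mem_sup_right (lie_e_H D j ha))
        (Submodule.mem_sup_right (lie_e_Esub D j b hb))

lemma lie_e_fword (D : Data 𝓘 g) (i : 𝓘) :
    ∀ l : List 𝓘, ⁅D.e i, fword D l⁆ ∈ D.H.toSubmodule ⊔ Fsub D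
  | [] => by simp [fword]
  | [j] => by
    simp only [fword_singleton]
    by_cases h : i = j
    · subst h
      rw [D.lie_e_f_same i]
      exact Submodule.mem_sup_left (D.coroot i).2
    · rw [D.lie_e_f_ne i j h]
      simp
  | j :: j' :: l' => by
    rw [fword_cons D j (by simp), leibniz_lie]
    apply Submodule.add_mem
    · have hh : ⁅D.e i, D.f j⁆ ∈ D.H.toSubmodule := by
        by_cases h : i = j
        · subst h; rw [D.lie_e_f_same i]; exact (D.coroot i).2
        · rw [D.lie_e_f_ne i j h]; simp
      rw [lie_Hmem_wt D (fword_mem_wt D (j' :: l')) hh]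
      exact Submodule.mem_sup_right
        (Submodule.smul_mem _ _ (fword_mem_Fsub D (by simp)))
    · have hrec := lie_e_fword D i (j' :: l')
      obtain ⟨a, ha, b, hb, hab⟩ := Submodule.mem_sup.1 hrec
      rw [← hab, lie_add]
      exact Submodule.add_mem _
        (Submodule.mem_sup_right (lie_f_H D j ha))
        (Submodule.mem_sup_right (lie_f_Fsub D j b hb))

lemma lie_e_T (D : Data 𝓘 g) (i : 𝓘) : ∀ x ∈ Tsub D, ⁅D.e i, x⁆ ∈ Tsub D := by
  intro x hx
  obtain ⟨ab, hab, c, hc, rfl⟩ := Submodule.mem_sup.1 hx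
  obtain ⟨a, ha, b, hb, rfl⟩ := Submodule.mem_sup.1 hab
  rw [lie_add, lie_add]
  refine Submodule.add_mem _ (Submodule.add_mem _ ?_ ?_) ?_
  · exact E_le_T D (lie_e_H D i ha)
  · exact E_le_T D (lie_e_Esub D i b hb)
  · refine lie_mem_span ?_ c hc
    rintro x ⟨l, hl, rfl⟩
    have := lie_e_fword D i l
    obtain ⟨a', ha', b', hb', hab'⟩ := Submodule.mem_sup.1 this
    rw [← hab']
    exact Submodule.add_mem _ (H_le_T D ha') (F_le_T D hb')

lemma lie_eword_eword (D : Data 𝓘 g) :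
    ∀ l m : List 𝓘, ⁅eword D l, eword D m⁆ ∈ Esub D
  | [], m => by simp [eword]
  | [j], m => by
    cases m with
    | nil => simp [eword]
    | cons j' m' =>
      rw [eword_singleton, ← eword_cons D j (by simp)]
      exact eword_mem_Esub D (by simp)
  | j :: j' :: l', m => by
    rw [eword_cons D j (by simp), lie_lie]
    apply Submodule.sub_mem
    · exact lie_e_Esub D j _ (lie_eword_eword D (j' :: l') m)
    · cases m with
      | nil => simp [eword]
      | cons k m' =>
        have he : ⁅D.e j, eword D (k :: m')⁆ = eword D (j :: k :: m') :=
          (eword_cons D j (by simp)).symm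
        rw [he]
        exact lie_eword_eword D (j' :: l') (j :: k :: m')
  termination_by l m => l.length

lemma lie_fword_fword (D : Data 𝓘 g) :
    ∀ l m : List 𝓘, ⁅fword D l, fword D m⁆ ∈ Fsub D
  | [], m => by simp [fword]
  | [j], m => by
    cases m with
    | nil => simp [fword]
    | cons j' m' =>
      rw [fword_singleton, ← fword_cons D j (by simp)]
      exact fword_mem_Fsub D (by simp)
  | j :: j' :: l', m => by
    rw [fword_cons D j (by simp), lie_lie]
    apply Submodule.sub_mem
    · exact lie_f_Fsub D j _ (lie_fword_fword D (j' :: l') m)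
    · cases m with
      | nil => simp [fword]
      | cons k m' =>
        have : ⁅D.f j, fword D (k :: m')⁆ = fword D (j :: k :: m') :=
          (fword_cons D j (by simp)).symm
        rw [this]
        exact lie_fword_fword D (j' :: l') (j :: k :: m')
  termination_by l m => l.length

lemma lie_eword_Fsub (D : Data 𝓘 g) :
    ∀ l : List 𝓘, ∀ x ∈ Fsub D, ⁅eword D l, x⁆ ∈ Tsub D
  | [] => by simp [eword]
  | [j] => by
    apply lie_mem_span
    rintro x ⟨m, hm, rfl⟩
    rw [eword_singleton]
    have := lie_e_fword D j m
    obtain ⟨a, ha, b, hb, hab⟩ := Submodule.mem_sup.1 this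
    rw [← hab]
    exact Submodule.add_mem _ (H_le_T D ha) (F_le_T D hb)
  | j :: j' :: l' => by
    apply lie_mem_span
    rintro x ⟨m, hm, rfl⟩
    rw [eword_cons D j (by simp), lie_lie]
    apply Submodule.sub_mem
    · exact lie_e_T D j _ (lie_eword_Fsub D (j' :: l') (fword D m) (fword_mem_Fsub D hm))
    · have := lie_e_fword D j m
      obtain ⟨a, ha, b, hb, hab⟩ := Submodule.mem_sup.1 this
      rw [← hab, lie_add]
      apply Submodule.add_mem
      · rw [lie_wt_H D (eword_mem_wt D (j' :: l')) ha]
        exact E_le_T D (Submodule.neg_mem _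
          (Submodule.smul_mem _ _ (eword_mem_Esub D (by simp))))
      · exact lie_eword_Fsub D (j' :: l') b hb
  termination_by l => l.length

lemma lie_T_T (D : Data 𝓘 g) : ∀ x ∈ Tsub D, ∀ y ∈ Tsub D, ⁅x, y⁆ ∈ Tsub D := by
  intro x hx y hy
  obtain ⟨ab, hab, c, hc, rfl⟩ := Submodule.mem_sup.1 hx
  obtain ⟨a, ha, b, hb, rfl⟩ := Submodule.mem_sup.1 hab
  rw [add_lie, add_lie]
  refine Submodule.add_mem _ (Submodule.add_mem _ ?_ ?_) ?_
  · -- a ∈ H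
    obtain ⟨a'b', ha'b', c', hc', rfl⟩ := Submodule.mem_sup.1 hy
    obtain ⟨a', ha', b', hb', rfl⟩ := Submodule.mem_sup.1 ha'b'
    rw [lie_add, lie_add]
    refine Submodule.add_mem _ (Submodule.add_mem _ ?_ ?_) ?_
    · rw [D.cartan_abelian ⟨a, ha⟩ ⟨a', ha'⟩]
      exact Submodule.zero_mem _
    · exact E_le_T D (lie_H_Esub D ha b' hb')
    · exact F_le_T D (lie_H_Fsub D ha c' hc')
  · -- b ∈ Esub
    refine span_lie_mem ?_ b hb
    rintro z ⟨l, hl, rfl⟩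
    obtain ⟨a'b', ha'b', c', hc', rfl⟩ := Submodule.mem_sup.1 hy
    obtain ⟨a', ha', b', hb', rfl⟩ := Submodule.mem_sup.1 ha'b'
    rw [lie_add, lie_add]
    refine Submodule.add_mem _ (Submodule.add_mem _ ?_ ?_) ?_
    · rw [lie_wt_H D (eword_mem_wt D l) ha']
      exact E_le_T D (Submodule.neg_mem _ (Submodule.smul_mem _ _ (eword_mem_Esub D hl)))
    · exact E_le_T D (lie_mem_span (fun z hz => by
        obtain ⟨m, hm, rfl⟩ := hz
        exact lie_eword_eword D l m) b' hb')
    · exact lie_eword_Fsub D l c' hc'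
  · -- c ∈ Fsub
    refine span_lie_mem ?_ c hc
    rintro z ⟨l, hl, rfl⟩
    obtain ⟨a'b', ha'b', c', hc', rfl⟩ := Submodule.mem_sup.1 hy
    obtain ⟨a', ha', b', hb', rfl⟩ := Submodule.mem_sup.1 ha'b'
    rw [lie_add, lie_add]
    refine Submodule.add_mem _ (Submodule.add_mem _ ?_ ?_) ?_
    · rw [lie_wt_H D (fword_mem_wt D l) ha']
      exact F_le_T D (Submodule.neg_mem _ (Submodule.smul_mem _ _ (fword_mem_Fsub D hl)))
    · rw [← lie_skew]
      refine Submodule.neg_mem _ (span_lie_mem ?_ b' hb')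
      rintro z ⟨m, hm, rfl⟩
      exact lie_eword_Fsub D m (fword D l) (fword_mem_Fsub D hl)
    · exact F_le_T D (lie_mem_span (fun z hz => by
        obtain ⟨m, hm, rfl⟩ := hz
        exact lie_fword_fword D l m) c' hc')

lemma Tsub_eq_top (D : Data 𝓘 g) : Tsub D = ⊤ := by
  let K : LieSubalgebra ℂ g :=
    { Tsub D with
      lie_mem' := fun {x y} hx hy => lie_T_T D x hx y hy }
  have hK : LieSubalgebra.lieSpan ℂ g ((D.H : Set g) ∪ Set.range D.e ∪ Set.range D.f) ≤ K := by
    apply LieSubalgebra.lieSpan_le.2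
    rintro x ((hx | ⟨i, rfl⟩) | ⟨i, rfl⟩)
    · exact H_le_T D hx
    · exact E_le_T D (eword_mem_Esub D (l := [i]) (by simp))
    · exact F_le_T D (fword_mem_Fsub D (l := [i]) (by simp))
  rw [D.generates] at hK
  refine le_antisymm le_top ?_
  intro x _
  exact hK trivial

/-- weight components spanned by words -/
def Comp (D : Data 𝓘 g) (μ : Module.Dual ℂ D.H) : Submodule ℂ g :=
  Submodule.span ℂ {x | (∃ l : List 𝓘, l ≠ [] ∧ lwt D l = μ ∧ eword D l = x) ∨
    (∃ l : List 𝓘, l ≠ [] ∧ -lwt D l = μ ∧ fword D l = x) ∨ (μ = 0 ∧ x ∈ D.H)}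

lemma Comp_le_wt (D : Data 𝓘 g) (μ : Module.Dual ℂ D.H) :
    Comp D μ ≤ wtSpace D.H g μ := by
  apply Submodule.span_le.2
  rintro x (⟨l, hl, rfl, rfl⟩ | ⟨l, hl, rfl, rfl⟩ | ⟨rfl, hx⟩)
  · exact eword_mem_wt D l
  · exact fword_mem_wt D l
  · exact H_mem_wt D ⟨x, hx⟩

lemma top_le_iSup_Comp (D : Data 𝓘 g) :
    (⊤ : Submodule ℂ g) ≤ ⨆ μ, Comp D μ := by
  rw [← Tsub_eq_top D]
  refine sup_le (sup_le ?_ ?_) ?_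
  · intro x hx
    exact Submodule.mem_iSup_of_mem 0
      (Submodule.subset_span (Or.inr (Or.inr ⟨rfl, hx⟩)))
  · refine Submodule.span_le.2 ?_
    rintro x ⟨l, hl, rfl⟩
    exact Submodule.mem_iSup_of_mem (lwt D l)
      (Submodule.subset_span (Or.inl ⟨l, hl, rfl, rfl⟩))
  · refine Submodule.span_le.2 ?_
    rintro x ⟨l, hl, rfl⟩
    exact Submodule.mem_iSup_of_mem (-(lwt D l))
      (Submodule.subset_span (Or.inr (Or.inl ⟨l, hl, rfl, rfl⟩)))

lemma wt_mem_Comp (D : Data 𝓘 g) (β : Module.Dual ℂ D.H) {x : g}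
    (hx : x ∈ wtSpace D.H g β) : x ∈ Comp D β := by
  classical
  have hx' : x ∈ ⨆ μ, Comp D μ := top_le_iSup_Comp D trivial
  rw [Submodule.mem_iSup_iff_exists_finsupp] at hx'
  obtain ⟨fc, hmem, hsum⟩ := hx'
  set s : Finset (Module.Dual ℂ D.H) := insert β fc.support with hs
  set y : Module.Dual ℂ D.H → g := fun μ => if μ = β then fc β - x else fc μ with hy
  have hywt : ∀ μ ∈ s, y μ ∈ wtSpace D.H g μ := by
    intro μ hμ
    by_cases hμβ : μ = β
    · subst hμβ
      simp only [hy, if_pos rfl]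
      exact Submodule.sub_mem _ (Comp_le_wt D μ (hmem μ)) hx
    · simp only [hy, if_neg hμβ]
      exact Comp_le_wt D μ (hmem μ)
  have hfc_sum : ∑ μ ∈ s, fc μ = x := by
    rw [← hsum, Finsupp.sum]
    refine (Finset.sum_subset (Finset.subset_insert β fc.support) ?_).symm
    intro μ _ hμ
    exact Finsupp.notMem_support_iff.1 hμ
  have hysum : ∑ μ ∈ s, y μ = 0 := by
    have hcong : ∀ μ ∈ s, y μ = fc μ - (if μ = β then x else 0) := by
      intro μ _
      by_cases hμβ : μ = β <;> simp [hy, hμβ]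
    rw [Finset.sum_congr rfl hcong, Finset.sum_sub_distrib, hfc_sum,
      Finset.sum_ite_eq' s β (fun _ => x), if_pos (Finset.mem_insert_self β _)]
    simp
  have hyβ := indepWt D s y hywt hysum β (Finset.mem_insert_self β _)
  simp only [hy, if_pos rfl] at hyβ
  have : x = fc β := by
    have := sub_eq_zero.1 hyβ
    exact this.symm
  rw [this]
  exact hmem β

lemma alpha_coeff' (D : Data 𝓘 g) (a b : 𝓘 → ℂ)
    (h : ∑ k, a k • D.α k = ∑ k, b k • D.α k) (k : 𝓘) : a k = b k := by
  have := Fintype.linearIndependent_iff.1 D.indepSimple (fun k => a k - b k) ?_ k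
  · exact sub_eq_zero.1 this
  · simp only [sub_smul, Finset.sum_sub_distrib, h, sub_self]

lemma cone_coeff (D : Data 𝓘 g) {μ : Module.Dual ℂ D.H}
    (hμ : μ ∈ cone (Set.range D.α)) : ∃ n : 𝓘 → ℕ, μ = ∑ k, (n k : ℂ) • D.α k := by
  have hμ' : μ ∈ AddSubmonoid.closure (Set.range D.α) := hμ
  clear hμ
  induction hμ' using AddSubmonoid.closure_induction with
  | mem x hx =>
    obtain ⟨i, rfl⟩ := hx
    refine ⟨fun k => if k = i then 1 else 0, ?_⟩
    rw [Finset.sum_congr rfl (fun k _ => ?_), Finset.sum_ite_eq' Finset.univ i D.α,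
      if_pos (Finset.mem_univ i)]
    by_cases hk : k = i <;> simp [hk]
  | zero => exact ⟨0, by simp⟩
  | add x y hx hy ihx ihy =>
    obtain ⟨n1, rfl⟩ := ihx
    obtain ⟨n2, rfl⟩ := ihy
    refine ⟨n1 + n2, ?_⟩
    rw [← Finset.sum_add_distrib]
    refine Finset.sum_congr rfl (fun k _ => ?_)
    rw [Pi.add_apply, Nat.cast_add, add_smul]

lemma sub_alpha_coeffs (D : Data 𝓘 g) (c : 𝓘 → ℕ) (j : 𝓘) :
    (∑ k, (c k : ℂ) • D.α k) - D.α j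
      = ∑ k, ((c k : ℂ) - if k = j then 1 else 0) • D.α k := by
  simp only [sub_smul, Finset.sum_sub_distrib]
  congr 1
  rw [Finset.sum_congr rfl (fun k _ => ?_), Finset.sum_ite_eq' Finset.univ j D.α,
    if_pos (Finset.mem_univ j)]
  by_cases hk : k = j <;> simp [hk]

lemma no_mixed_root (D : Data 𝓘 g) (a : 𝓘 → ℕ) (j : 𝓘) (hj : a j = 0)
    (k0 : 𝓘) (hk0 : a k0 ≠ 0) :
    wtSpace D.H g ((∑ k, (a k : ℂ) • D.α k) - D.α j) = ⊥ := by
  by_contra hne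
  set μ := (∑ k, (a k : ℂ) • D.α k) - D.α j with hμdef
  set r : 𝓘 → ℂ := fun k => (a k : ℂ) - if k = j then 1 else 0 with hr
  have hμr : μ = ∑ k, r k • D.α k := sub_alpha_coeffs D a j
  have hrj : r j = -1 := by simp [hr, hj]
  have hrk0 : r k0 = (a k0 : ℂ) := by
    have : k0 ≠ j := by intro h; rw [h, hj] at hk0; exact hk0 rfl
    simp [hr, this]
  have hμ0 : μ ≠ 0 := by
    intro h0
    have : r j = (0 : ℂ) := by
      have h0' : ∑ k, r k • D.α k = ∑ k, (0 : ℂ) • D.α k := by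
        rw [← hμr, h0]; simp
      exact alpha_coeff' D r (fun _ => 0) h0' j
    rw [hrj] at this; norm_num at this
  rcases D.root_pm μ hμ0 hne with h | h
  · obtain ⟨n, hn⟩ := cone_coeff D h
    have := alpha_coeff' D r (fun k => (n k : ℂ)) (by rw [← hμr, ← hn]) j
    rw [hrj] at this
    have : (-1 : ℤ) = (n j : ℤ) := by exact_mod_cast this
    omega
  · obtain ⟨n, hn⟩ := cone_coeff D h
    have hneg : -μ = ∑ k, (-(r k)) • D.α k := by
      rw [hμr, ← Finset.sum_neg_distrib]
      exact Finset.sum_congr rfl (fun k _ => (neg_smul _ _).symm)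
    have := alpha_coeff' D (fun k => -(r k)) (fun k => (n k : ℂ)) (by rw [← hneg, ← hn]) k0
    rw [hrk0] at this
    have : (-(a k0 : ℤ)) = (n k0 : ℤ) := by exact_mod_cast this
    omega

lemma count_cons_eq (j k : 𝓘) (l : List 𝓘) :
    (j :: l).count k = l.count k + if k = j then 1 else 0 := by
  by_cases hk : k = j <;> simp [List.count_cons, hk] <;> exact Ne.symm hk

lemma lwt_eq_count (D : Data 𝓘 g) :
    ∀ l : List 𝓘, lwt D l = ∑ k, (l.count k : ℂ) • D.α k := by
  intro l
  induction l with
  | nil => simp [lwt]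
  | cons i l ih =>
    rw [lwt_cons, ih]
    have key : ∀ k ∈ Finset.univ, (((i :: l).count k : ℂ)) • D.α k
        = (l.count k : ℂ) • D.α k + (if k = i then (1:ℂ) else 0) • D.α k := by
      intro k _
      have hcc : (i :: l).count k = l.count k + (if k = i then 1 else 0) := by
        by_cases hk : k = i <;> simp [List.count_cons, hk] <;> exact Ne.symm hk
      have hcast : ((if k = i then 1 else 0 : ℕ) : ℂ) = (if k = i then (1:ℂ) else 0) := by
        by_cases hk : k = i <;> simp [hk]
      rw [hcc, Nat.cast_add, add_smul, hcast]
    rw [Finset.sum_congr rfl key, Finset.sum_add_distrib]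
    have hite : ∑ k, (if k = i then (1:ℂ) else 0) • D.α k = D.α i := by
      have h' : ∀ k ∈ Finset.univ, (if k = i then (1:ℂ) else 0) • D.α k
          = if k = i then D.α k else 0 := by
        intro k _
        by_cases hk : k = i <;> simp [hk]
      rw [Finset.sum_congr rfl h', Finset.sum_ite_eq' Finset.univ i D.α,
        if_pos (Finset.mem_univ i)]
    rw [hite]
    abel

lemma sum_filter_eq_one (c : 𝓘 → ℕ) (I : Set 𝓘)
    (h : ∑ k ∈ Finset.univ.filter (fun k => k ∈ I), c k = 1) :
    ∃ i0, i0 ∈ I ∧ c i0 = 1 ∧ ∀ k, k ∈ I → k ≠ i0 → c k = 0 := by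
  classical
  set s := Finset.univ.filter (fun k => k ∈ I) with hs
  have hex : ∃ i0 ∈ s, c i0 ≠ 0 := by
    by_contra hno
    push_neg at hno
    rw [Finset.sum_eq_zero (fun k hk => hno k hk)] at h
    omega
  obtain ⟨i0, hi0s, hne⟩ := hex
  have hsplit : c i0 + ∑ k ∈ s.erase i0, c k = 1 := by
    rw [Finset.add_sum_erase _ _ hi0s]; exact h
  have hc1 : c i0 = 1 := by omega
  have hrest : ∑ k ∈ s.erase i0, c k = 0 := by omega
  refine ⟨i0, (Finset.mem_filter.1 hi0s).2, hc1, fun k hkI hki0 => ?_⟩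
  have hk : k ∈ s.erase i0 :=
    Finset.mem_erase.2 ⟨hki0, Finset.mem_filter.2 ⟨Finset.mem_univ k, hkI⟩⟩
  exact Finset.sum_eq_zero_iff.1 hrest k hk

lemma main_step (D : Data 𝓘 g) (I : Set 𝓘) (β : Module.Dual ℂ D.H)
    (hroot : β ∈ roots D) (c : 𝓘 → ℕ) (hc : β = ∑ k, (c k : ℂ) • D.α k)
    (h1 : ∑ k ∈ Finset.univ.filter (fun k => k ∈ I), c k = 1)
    (h2 : 0 < ∑ k ∈ Finset.univ.filter (fun k => k ∉ I), c k) :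
    ∃ j, j ∉ I ∧ c j ≠ 0 ∧ (β - D.α j) ∈ roots D := by
  classical
  obtain ⟨i0, hi0I, hci0, hothers⟩ := sum_filter_eq_one c I h1
  by_contra hcon
  push_neg at hcon
  have hsub_ne : ∀ j, j ∉ I → β - D.α j ≠ 0 := by
    intro j hj h0
    have hji0 : i0 ≠ j := fun h => hj (h ▸ hi0I)
    have h0' : ∑ k, ((c k : ℂ) - if k = j then 1 else 0) • D.α k
        = ∑ k, (0 : ℂ) • D.α k := by
      rw [← sub_alpha_coeffs D c j, ← hc, h0]; simp
    have := alpha_coeff' D _ _ h0' i0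
    rw [if_neg hji0] at this
    simp only [sub_zero] at this
    rw [hci0] at this
    norm_num at this
  have Zall : ∀ j, j ∉ I → wtSpace D.H g (β - D.α j) = ⊥ := by
    intro j hj
    by_cases hcj : c j = 0
    · rw [hc]
      exact no_mixed_root D c j hcj i0 (by omega)
    · by_contra hb
      exact hcon j hj hcj ⟨hsub_ne j hj, hb⟩
  have claim : ∀ l : List 𝓘, l ≠ [] → (∀ k ∈ l, k ∉ I) →
      ∀ u ∈ wtSpace D.H g (β - lwt D l), ⁅u, eword D l⁆ = 0 := by
    intro l
    induction l with
    | nil => intro h; exact absurd rfl h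
    | cons j l' ih =>
      intro _ hmem u hu
      have hjI : j ∉ I := hmem j (List.mem_cons_self (a := j) (l := l'))
      by_cases hl' : l' = []
      · subst hl'
        have hw : β - lwt D [j] = β - D.α j := by simp
        rw [hw, Zall j hjI, Submodule.mem_bot] at hu
        rw [hu, zero_lie]
      · rw [eword_cons D j hl', leibniz_lie]
        have hterm2 : ⁅u, eword D l'⁆ = 0 := by
          have hm : ⁅u, eword D l'⁆ ∈ wtSpace D.H g ((β - lwt D (j :: l')) + lwt D l') :=
            wt_bracket D hu (eword_mem_wt D l')
          have hw : (β - lwt D (j :: l')) + lwt D l' = β - D.α j := by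
            rw [lwt_cons]; abel
          rw [hw, Zall j hjI, Submodule.mem_bot] at hm
          exact hm
        have hterm1 : ⁅u, D.e j⁆ ∈ wtSpace D.H g (β - lwt D l') := by
          have hm : ⁅u, D.e j⁆ ∈ wtSpace D.H g ((β - lwt D (j :: l')) + D.α j) :=
            wt_bracket D hu (e_mem_wt D j)
          have hw : (β - lwt D (j :: l')) + D.α j = β - lwt D l' := by
            rw [lwt_cons]; abel
          rw [← hw]; exact hm
        rw [ih hl' (fun k hk => hmem k (List.mem_cons_of_mem j hk)) _ hterm1,
          hterm2, lie_zero, add_zero]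
  have hwzero : wtSpace D.H g β = ⊥ := by
    rw [Submodule.eq_bot_iff]
    intro x hx
    have hxC := wt_mem_Comp D β hx
    have hbot : ∀ z : g, z = 0 → z ∈ ((⊥ : Submodule ℂ g) : Set g) := by simp
    have hCbot : Comp D β ≤ ⊥ := by
      apply Submodule.span_le.2
      rintro z (⟨l, hl, hwt, rfl⟩ | ⟨l, hl, hwt, rfl⟩ | ⟨hβ0, hz⟩) <;> apply hbot
      · -- e-word of weight β
        have hcount : ∀ k, l.count k = c k := by
          intro k
          have h1' : ∑ k, ((l.count k : ℂ)) • D.α k = ∑ k, (c k : ℂ) • D.α k := by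
            rw [← lwt_eq_count, hwt, hc]
          exact_mod_cast alpha_coeff' D _ _ h1' k
        obtain ⟨k1, hk1I, hck1⟩ : ∃ k1, k1 ∉ I ∧ c k1 ≠ 0 := by
          by_contra hno
          push_neg at hno
          rw [Finset.sum_eq_zero (fun k hk => hno k (Finset.mem_filter.1 hk).2)] at h2
          omega
        have hk1i0 : k1 ≠ i0 := fun h => hk1I (h ▸ hi0I)
        cases l with
        | nil => exact absurd rfl hl
        | cons j l' =>
          by_cases hjI : j ∈ I
          · have hj0 : j = i0 := by
              by_contra hji0
              have hcj : c j = 0 := hothers j hjI hji0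
              have hcnt := hcount j
              rw [count_cons_eq, if_pos rfl] at hcnt
              omega
            have hcj1 : c j = 1 := by rw [hj0]; exact hci0
            have hothersj : ∀ k, k ∈ I → k ≠ j → c k = 0 := by
              intro k hk hkj
              exact hothers k hk (fun h => hkj (h.trans hj0.symm))
            have hk1j : k1 ≠ j := fun h => hk1I (h ▸ hjI)
            have hl' : l' ≠ [] := by
              rintro rfl
              have hcnt := hcount k1
              rw [count_cons_eq] at hcnt
              simp only [List.count_nil] at hcnt
              rw [if_neg hk1j] at hcnt
              omega
            have hmem' : ∀ k ∈ l', k ∉ I := by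
              intro k hk hkI
              by_cases hkj : k = j
              · subst hkj
                have hcnt := hcount k
                rw [count_cons_eq, if_pos rfl] at hcnt
                have : l'.count k = 0 := by omega
                exact (List.count_eq_zero.1 this) hk
              · have hck : c k = 0 := hothersj k hkI hkj
                have hcnt := hcount k
                rw [count_cons_eq, if_neg hkj] at hcnt
                have : l'.count k = 0 := by omega
                exact (List.count_eq_zero.1 this) hk
            rw [eword_cons D j hl']
            apply claim l' hl' hmem' (D.e j)
            have hwl : β - lwt D l' = D.α j := by
              rw [← hwt, lwt_cons]; abel
            rw [hwl]
            exact e_mem_wt D j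
          · by_cases hl' : l' = []
            · subst hl'
              exfalso
              have hcnt := hcount i0
              rw [count_cons_eq] at hcnt
              simp only [List.count_nil] at hcnt
              by_cases hij : i0 = j
              · exact hjI (hij ▸ hi0I)
              · rw [if_neg hij] at hcnt
                omega
            · rw [eword_cons D j hl']
              have : eword D l' = 0 := by
                have hm := eword_mem_wt D l'
                have hwl : lwt D l' = β - D.α j := by
                  rw [← hwt, lwt_cons]; abel
                rw [hwl, Zall j hjI, Submodule.mem_bot] at hm
                exact hm
              rw [this, lie_zero]
      · -- f-word of weight β : impossible
        exfalso
        have h1' : ∑ k, (-(l.count k : ℂ)) • D.α k = ∑ k, (c k : ℂ) • D.α k := by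
          rw [← hc, ← hwt, lwt_eq_count, ← Finset.sum_neg_distrib]
          exact Finset.sum_congr rfl (fun k _ => neg_smul _ _)
        have := alpha_coeff' D _ _ h1' i0
        rw [hci0] at this
        have : (-(l.count i0 : ℤ)) = (1 : ℤ) := by exact_mod_cast this
        omega
      · -- β = 0 : impossible
        exfalso
        have h1' : ∑ k, (0 : ℂ) • D.α k = ∑ k, (c k : ℂ) • D.α k := by
          rw [← hc, hβ0]; simp
        have := alpha_coeff' D _ _ h1' i0
        rw [hci0] at this
        norm_num at this
    exact (Submodule.mem_bot ℂ).1 (hCbot hxC)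
  exact hroot.2 hwzero

lemma cprime (D : Data 𝓘 g) (c : 𝓘 → ℕ) {j : 𝓘} (hcj : c j ≠ 0) :
    (∑ k, (c k : ℂ) • D.α k) - D.α j
      = ∑ k, (((c k - if k = j then 1 else 0 : ℕ)) : ℂ) • D.α k := by
  rw [sub_alpha_coeffs D c j]
  refine Finset.sum_congr rfl (fun k _ => ?_)
  congr 1
  by_cases hk : k = j
  · subst hk
    rw [if_pos rfl, if_pos rfl, Nat.cast_sub (by omega)]
    norm_num
  · rw [if_neg hk, if_neg hk]
    simp

lemma cprime_sum (c : 𝓘 → ℕ) {j : 𝓘} (hcj : c j ≠ 0) :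
    ∑ k, (c k - if k = j then 1 else 0) = (∑ k, c k) - 1 := by
  classical
  have h1 := (Finset.add_sum_erase Finset.univ
    (fun k => c k - if k = j then 1 else 0) (Finset.mem_univ j)).symm
  have h2 := (Finset.add_sum_erase Finset.univ c (Finset.mem_univ j)).symm
  have hsame : ∑ k ∈ Finset.univ.erase j, (c k - if k = j then 1 else 0)
      = ∑ k ∈ Finset.univ.erase j, c k := by
    refine Finset.sum_congr rfl (fun k hk => ?_)
    rw [if_neg (Finset.mem_erase.1 hk).1]
    omega
  rw [hsame] at h1
  rw [if_pos rfl] at h1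
  omega

lemma chain (D : Data 𝓘 g) (I : Set 𝓘) :
    ∀ n : ℕ, ∀ β : Module.Dual ℂ D.H, β ∈ roots D → ∀ c : 𝓘 → ℕ,
      β = ∑ k, (c k : ℂ) • D.α k →
      (∑ k ∈ Finset.univ.filter (fun k => k ∈ I), c k) = 1 → (∑ k, c k) = n →
      ∃ βs : ℕ → Module.Dual ℂ D.H, βs 0 = β ∧
        (∀ t, t + 1 < n → ∃ j, j ∉ I ∧ βs t - βs (t + 1) = D.α j) ∧
        (∀ t, t < n → InDeltaI1 D I (βs t)) ∧
        (∃ i, i ∈ I ∧ c i ≠ 0 ∧ βs (n - 1) = D.α i) := by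
  intro n
  induction n using Nat.strong_induction_on with
  | _ n ih =>
  intro β hroot c hc h1 hn
  obtain ⟨i0, hi0I, hci0, hothers⟩ := sum_filter_eq_one c I h1
  have hsplit := Finset.sum_filter_add_sum_filter_not Finset.univ (fun k => k ∈ I) c
  by_cases h2 : ∑ k ∈ Finset.univ.filter (fun k => k ∉ I), c k = 0
  · -- base case : n = 1
    have hn1 : n = 1 := by
      rw [← hn, ← hsplit, h1]
      rw [show (∑ k ∈ Finset.univ.filter (fun k => ¬ k ∈ I), c k) = 0 from h2]
    have hβα : β = D.α i0 := by
      have hck : ∀ k, k ≠ i0 → c k = 0 := by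
        intro k hk
        by_cases hkI : k ∈ I
        · exact hothers k hkI hk
        · exact Finset.sum_eq_zero_iff.1 h2 k
            (Finset.mem_filter.2 ⟨Finset.mem_univ k, hkI⟩)
      rw [hc, Finset.sum_eq_single i0 (fun k _ hk => by rw [hck k hk]; simp)
        (fun h => absurd (Finset.mem_univ i0) h), hci0]
      simp
    refine ⟨fun _ => β, rfl, fun t ht => absurd ht (by omega), fun t ht => ⟨hroot, c, hc, h1⟩,
      i0, hi0I, by omega, hβα⟩
  · have h2' : 0 < ∑ k ∈ Finset.univ.filter (fun k => k ∉ I), c k := Nat.pos_of_ne_zero h2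
    obtain ⟨j, hjI, hcj, hroot'⟩ := main_step D I β hroot c hc h1 h2'
    set c' : 𝓘 → ℕ := fun k => c k - if k = j then 1 else 0 with hc'def
    have hc' : β - D.α j = ∑ k, (c' k : ℂ) • D.α k := by
      rw [hc]; exact cprime D c hcj
    have h1' : ∑ k ∈ Finset.univ.filter (fun k => k ∈ I), c' k = 1 := by
      rw [← h1]
      refine Finset.sum_congr rfl (fun k hk => ?_)
      have hkj : k ≠ j := fun h => hjI (h ▸ (Finset.mem_filter.1 hk).2)
      simp [hc'def, hkj]
    have hsum' : ∑ k, c' k = n - 1 := by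
      rw [hc'def, cprime_sum c hcj, hn]
    have hn2 : 2 ≤ n := by
      have hj' : j ∈ Finset.univ.filter (fun k => k ∉ I) :=
        Finset.mem_filter.2 ⟨Finset.mem_univ j, hjI⟩
      have := Finset.single_le_sum (f := c) (fun k _ => Nat.zero_le _) hj'
      omega
    obtain ⟨βs', h0', hdiff', hin', i, hiI, hci, hlast'⟩ :=
      ih (n - 1) (by omega) (β - D.α j) hroot' c' hc' h1' hsum'
    refine ⟨fun t => if t = 0 then β else βs' (t - 1), by simp, ?_, ?_, ?_⟩
    · intro t ht
      by_cases ht0 : t = 0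
      · subst ht0
        refine ⟨j, hjI, ?_⟩
        show (if (0:ℕ) = 0 then β else βs' (0 - 1)) -
          (if (0 + 1 : ℕ) = 0 then β else βs' (0 + 1 - 1)) = D.α j
        rw [if_pos rfl, if_neg (show ¬ (0 + 1 : ℕ) = 0 by omega)]
        rw [show (0 + 1 : ℕ) - 1 = 0 from rfl, h0', sub_sub_cancel]
      · have ht' : (t - 1) + 1 < n - 1 := by omega
        obtain ⟨j', hj', he⟩ := hdiff' (t - 1) ht'
        refine ⟨j', hj', ?_⟩
        simp only [if_neg ht0, if_neg (show ¬ t + 1 = 0 by omega)]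
        rw [show t + 1 - 1 = (t - 1) + 1 by omega]
        exact he
    · intro t ht
      by_cases ht0 : t = 0
      · subst ht0
        show InDeltaI1 D I (if (0:ℕ) = 0 then β else βs' (0 - 1))
        rw [if_pos rfl]
        exact ⟨hroot, c, hc, h1⟩
      · simp only [if_neg ht0]
        exact hin' (t - 1) (by omega)
    · refine ⟨i, hiI, ?_, ?_⟩
      · intro h0
        exact hci (by simp [hc'def, h0])
      · have hne : ¬ (n - 1 = 0) := by omega
        simp only [if_neg hne]
        exact hlast'

end Aux

/-- Lemma 2.12: if `β ∈ Δ` has `ht_I(β) = 1` and `ht_{I^c}(β) > 0`,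
then `β − α_j ∈ Δ_{I,1}` for some `j ∈ I^c ∩ supp β`; consequently there is a chain
`β = β_1 ⊋ β_2 ⊋ ⋯ ⊋ β_m` in `Δ_{I,1}` with `m = ht β`, consecutive differences simple
roots from `Π_{I^c}`, terminating at the simple root `α_i` with `{i} = I ∩ supp β`. -/
theorem unit_I_height_root_chain
    {𝓘 : Type} [Fintype 𝓘] [DecidableEq 𝓘] {g : Type} [LieRing g] [LieAlgebra ℂ g]
    (D : Data 𝓘 g) (I : Set 𝓘) (hI : I.Nonempty)
    (β : Module.Dual ℂ D.H) (hβroot : β ∈ roots D)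
    (c : 𝓘 → ℕ) (hc : β = ∑ k, (c k : ℂ) • D.α k)
    (hhtI : ∑ k ∈ Finset.univ.filter (fun k => k ∈ I), c k = 1)
    (hhtIc : 0 < ∑ k ∈ Finset.univ.filter (fun k => k ∉ I), c k) :
    (∃ j : 𝓘, j ∉ I ∧ c j ≠ 0 ∧ InDeltaI1 D I (β - D.α j)) ∧
      (∃ βs : ℕ → Module.Dual ℂ D.H,
        βs 0 = β ∧
        (∀ t : ℕ, t + 1 < ∑ k, c k → ∃ j : 𝓘, j ∉ I ∧ βs t - βs (t + 1) = D.α j) ∧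
        (∀ t : ℕ, t < ∑ k, c k → InDeltaI1 D I (βs t)) ∧
        (∃ i : 𝓘, i ∈ I ∧ c i ≠ 0 ∧ βs (∑ k, c k - 1) = D.α i)) := by
  obtain ⟨j, hjI, hcj, hroot'⟩ := main_step D I β hβroot c hc hhtI hhtIc
  constructor
  · refine ⟨j, hjI, hcj, hroot', fun k => c k - if k = j then 1 else 0, ?_, ?_⟩
    · rw [hc]; exact cprime D c hcj
    · rw [← hhtI]
      refine Finset.sum_congr rfl (fun k hk => ?_)
      have hkj : k ≠ j := fun h => hjI (h ▸ (Finset.mem_filter.1 hk).2)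
      simp [hkj]
  · exact chain D I (∑ k, c k) β hβroot c hc hhtI rfl

end KM
end

section
/- Let N ∈ ℤ_{≥0}, let i ∈ 𝓘, and let J ⊆ 𝓘 be an independent subset with ⟨α_i, α_j^∨⟩ ≤ 0 for all j ∈ J. Then for any integers c_j with c_j > −N⟨α_i, α_j^∨⟩ for each j ∈ J, the following holds in U(𝔤): (∏_{j∈J} f_j^{c_j})·f_i^N ∈ U(n⁻)·(∏_{j∈J} f_j^{c_j + N⟨α_i, α_j^∨⟩}). (The products over J are unambiguous since the f_j for j ∈ J pairwise commute.) -/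
open scoped BigOperators

attribute [local instance] Classical.propDecidable

namespace KM

variable {g : Type} [LieRing g] [LieAlgebra ℂ g]

variable {𝓘 : Type}

private def adR {R : Type*} [Ring R] [Algebra ℂ R] (a : R) : R →ₗ[ℂ] R :=
  LinearMap.mulLeft ℂ a - LinearMap.mulRight ℂ a

private lemma adR_apply {R : Type*} [Ring R] [Algebra ℂ R] (a y : R) :
    adR a y = a * y - y * a := rfl

private lemma base_span {R : Type*} [Ring R] [Algebra ℂ R] (a b : R) (c : ℕ) :
    a ^ c * b ∈ Submodule.span ℂ
      {z : R | ∃ k e, k + e = c ∧ z = ((adR a) ^ k) b * a ^ e} := by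
  induction c with
  | zero =>
    exact Submodule.subset_span ⟨0, 0, rfl, by simp⟩
  | succ c ih =>
    have h : a ^ (c + 1) * b = a * (a ^ c * b) := by
      rw [pow_succ']; rw [mul_assoc]
    rw [h]
    refine Submodule.span_induction
      (p := fun z _ => a * z ∈ Submodule.span ℂ
        {z : R | ∃ k e, k + e = c + 1 ∧ z = ((adR a) ^ k) b * a ^ e})
      ?_ ?_ ?_ ?_ ih
    · rintro z ⟨k, e, hke, rfl⟩
      have key : a * (((adR a) ^ k) b * a ^ e)
          = ((adR a) ^ (k + 1)) b * a ^ e + ((adR a) ^ k) b * a ^ (e + 1) := by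
        have h1 : ((adR a) ^ (k + 1)) b = a * ((adR a) ^ k) b - ((adR a) ^ k) b * a := by
          rw [pow_succ', Module.End.mul_apply, adR_apply]
        rw [h1, pow_succ']
        noncomm_ring
      rw [key]
      exact add_mem (Submodule.subset_span ⟨k + 1, e, by omega, rfl⟩)
        (Submodule.subset_span ⟨k, e + 1, by omega, rfl⟩)
    · show a * 0 ∈ _
      rw [mul_zero]; exact zero_mem _
    · intro y z _ _ hy hz
      show a * (y + z) ∈ _
      rw [mul_add]; exact add_mem hy hz
    · intro r y _ hy
      show a * (r • y) ∈ _
      rw [mul_smul_comm]; exact Submodule.smul_mem _ _ hy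


private lemma trunc_span {R : Type*} [Ring R] [Algebra ℂ R] (a b : R) (m : ℕ)
    (hm : ((adR a) ^ m) b = 0) (c : ℕ) :
    a ^ c * b ∈ Submodule.span ℂ
      {z : R | ∃ k e, k < m ∧ c ≤ e + (m - 1) ∧ z = ((adR a) ^ k) b * a ^ e} := by
  refine Submodule.span_le.mpr ?_ (base_span a b c)
  rintro z ⟨k, e, hke, rfl⟩
  by_cases hk : k < m
  · exact Submodule.subset_span ⟨k, e, hk, by omega, rfl⟩
  · have hz : ((adR a) ^ k) b = 0 := by
      have hkm : k = (k - m) + m := by omega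
      rw [hkm, pow_add, Module.End.mul_apply, hm, map_zero]
    rw [hz, zero_mul]
    exact zero_mem _

section KMaux

variable {𝓘 : Type} {g : Type} [LieRing g] [LieAlgebra ℂ g]

attribute [local instance 100] LieRing.ofAssociativeRing

private lemma iota_lie (x y : g) :
    UniversalEnvelopingAlgebra.ι ℂ ⁅x, y⁆ =
      UniversalEnvelopingAlgebra.ι ℂ x * UniversalEnvelopingAlgebra.ι ℂ y -
        UniversalEnvelopingAlgebra.ι ℂ y * UniversalEnvelopingAlgebra.ι ℂ x := by
  rw [LieHom.map_lie, Ring.lie_def]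

private lemma adR_pow_iota (a : g) (k : ℕ) (x : g) :
    ((adR (UniversalEnvelopingAlgebra.ι ℂ a)) ^ k) (UniversalEnvelopingAlgebra.ι ℂ x)
      = UniversalEnvelopingAlgebra.ι ℂ (((LieAlgebra.ad ℂ g a) ^ k) x) := by
  induction k generalizing x with
  | zero => simp
  | succ k ih =>
    rw [pow_succ, Module.End.mul_apply, pow_succ, Module.End.mul_apply,
      LieAlgebra.ad_apply]
    rw [← ih ⁅a, x⁆]
    congr 1
    rw [adR_apply, iota_lie]

private noncomputable abbrev negPart (D : Data 𝓘 g) :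
    Subalgebra ℂ (UniversalEnvelopingAlgebra ℂ g) :=
  Algebra.adjoin ℂ (Set.range fun k => UniversalEnvelopingAlgebra.ι ℂ (D.f k))

private lemma iota_f_mem (D : Data 𝓘 g) (j : 𝓘) :
    UniversalEnvelopingAlgebra.ι ℂ (D.f j) ∈ negPart D :=
  Algebra.subset_adjoin ⟨j, rfl⟩

private lemma adpow_mem (D : Data 𝓘 g) (j : 𝓘) (k : ℕ) (x : g)
    (hx : UniversalEnvelopingAlgebra.ι ℂ x ∈ negPart D) :
    UniversalEnvelopingAlgebra.ι ℂ (((LieAlgebra.ad ℂ g (D.f j)) ^ k) x) ∈ negPart D := by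
  induction k generalizing x with
  | zero => simpa using hx
  | succ k ih =>
    rw [pow_succ, Module.End.mul_apply, LieAlgebra.ad_apply]
    refine ih _ ?_
    rw [iota_lie]
    exact sub_mem (mul_mem (iota_f_mem D j) hx) (mul_mem hx (iota_f_mem D j))

private lemma commute_F (D : Data 𝓘 g) {j k : 𝓘} (h : ⁅D.f j, D.f k⁆ = 0) :
    Commute (UniversalEnvelopingAlgebra.ι ℂ (D.f j))
      (UniversalEnvelopingAlgebra.ι ℂ (D.f k)) := by
  have h2 := iota_lie (D.f j) (D.f k)
  rw [h, map_zero] at h2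
  exact sub_eq_zero.mp h2.symm

private lemma commute_ad {a b : g} (h : ⁅a, b⁆ = 0) :
    Commute (LieAlgebra.ad ℂ g a) (LieAlgebra.ad ℂ g b) := by
  have h2 := (LieAlgebra.ad ℂ g).map_lie a b
  rw [h, map_zero, Ring.lie_def] at h2
  exact sub_eq_zero.mp h2.symm

private lemma listStep (D : Data 𝓘 g) (m c d : 𝓘 → ℕ) :
    ∀ l : List 𝓘, l.Nodup →
    (∀ j ∈ l, ∀ k ∈ l, j ≠ k → ⁅D.f j, D.f k⁆ = 0) →
    (∀ j ∈ l, c j = d j + (m j - 1)) →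
    ∀ x : g, UniversalEnvelopingAlgebra.ι ℂ x ∈ negPart D →
    (∀ j ∈ l, ((LieAlgebra.ad ℂ g (D.f j)) ^ (m j)) x = 0) →
    ∃ u ∈ negPart D,
      (l.map fun j => UniversalEnvelopingAlgebra.ι ℂ (D.f j) ^ c j).prod *
          UniversalEnvelopingAlgebra.ι ℂ x
        = u * (l.map fun j => UniversalEnvelopingAlgebra.ι ℂ (D.f j) ^ d j).prod := by
  intro l
  induction l using List.reverseRecOn with
  | nil =>
    intro _ _ _ x hx _
    exact ⟨_, hx, by simp⟩
  | append_singleton t j₀ ih =>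
    intro hl hcomm hcd x hx hser
    rw [List.nodup_append] at hl
    obtain ⟨ht, -, hdisj⟩ := hl
    have hjt : j₀ ∉ t := fun h => hdisj _ h _ (List.mem_singleton_self j₀) rfl
    have hmemj : j₀ ∈ t ++ [j₀] := List.mem_append_right _ (List.mem_singleton_self j₀)
    have hmemt : ∀ a, a ∈ t → a ∈ t ++ [j₀] := fun a ha => List.mem_append_left _ ha
    have hserj : ((adR (UniversalEnvelopingAlgebra.ι ℂ (D.f j₀))) ^ (m j₀))
        (UniversalEnvelopingAlgebra.ι ℂ x) = 0 := by
      rw [adR_pow_iota, hser j₀ hmemj, map_zero]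
    have key := trunc_span (UniversalEnvelopingAlgebra.ι ℂ (D.f j₀))
      (UniversalEnvelopingAlgebra.ι ℂ x) (m j₀) hserj (c j₀)
    have hmapc : ((t ++ [j₀]).map fun j => UniversalEnvelopingAlgebra.ι ℂ (D.f j) ^ c j).prod
        = (t.map fun j => UniversalEnvelopingAlgebra.ι ℂ (D.f j) ^ c j).prod *
            UniversalEnvelopingAlgebra.ι ℂ (D.f j₀) ^ c j₀ := by simp
    have hmapd : ((t ++ [j₀]).map fun j => UniversalEnvelopingAlgebra.ι ℂ (D.f j) ^ d j).prod
        = (t.map fun j => UniversalEnvelopingAlgebra.ι ℂ (D.f j) ^ d j).prod *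
            UniversalEnvelopingAlgebra.ι ℂ (D.f j₀) ^ d j₀ := by simp
    suffices hsuf : (t.map fun j => UniversalEnvelopingAlgebra.ι ℂ (D.f j) ^ c j).prod *
        (UniversalEnvelopingAlgebra.ι ℂ (D.f j₀) ^ c j₀ * UniversalEnvelopingAlgebra.ι ℂ x) ∈
        Submodule.map (LinearMap.mulRight ℂ
          ((t.map fun j => UniversalEnvelopingAlgebra.ι ℂ (D.f j) ^ d j).prod *
            UniversalEnvelopingAlgebra.ι ℂ (D.f j₀) ^ d j₀))
          (Subalgebra.toSubmodule (negPart D)) by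
      obtain ⟨u, hu, hequ⟩ := hsuf
      refine ⟨u, (Subalgebra.mem_toSubmodule _).mp hu, ?_⟩
      rw [hmapc, hmapd, mul_assoc]
      rw [← hequ, LinearMap.mulRight_apply]
    refine Submodule.span_induction
      (p := fun z _ => (t.map fun j => UniversalEnvelopingAlgebra.ι ℂ (D.f j) ^ c j).prod * z ∈
        Submodule.map (LinearMap.mulRight ℂ
          ((t.map fun j => UniversalEnvelopingAlgebra.ι ℂ (D.f j) ^ d j).prod *
            UniversalEnvelopingAlgebra.ι ℂ (D.f j₀) ^ d j₀))
          (Subalgebra.toSubmodule (negPart D)))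
      ?_ ?_ ?_ ?_ key
    · rintro z ⟨k, e, hk, he, rfl⟩
      show (t.map fun j => UniversalEnvelopingAlgebra.ι ℂ (D.f j) ^ c j).prod *
        (((adR (UniversalEnvelopingAlgebra.ι ℂ (D.f j₀))) ^ k)
            (UniversalEnvelopingAlgebra.ι ℂ x) *
          UniversalEnvelopingAlgebra.ι ℂ (D.f j₀) ^ e) ∈ _
      rw [adR_pow_iota]
      set y := ((LieAlgebra.ad ℂ g (D.f j₀)) ^ k) x with hy
      have hymem : UniversalEnvelopingAlgebra.ι ℂ y ∈ negPart D := adpow_mem D j₀ k x hx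
      have hsery : ∀ j' ∈ t, ((LieAlgebra.ad ℂ g (D.f j')) ^ (m j')) y = 0 := by
        intro j' hj'
        have hne : j' ≠ j₀ := fun hh => hjt (hh ▸ hj')
        have hb : ⁅D.f j', D.f j₀⁆ = 0 := hcomm j' (hmemt _ hj') j₀ hmemj hne
        have hC : Commute ((LieAlgebra.ad ℂ g (D.f j')) ^ (m j'))
            ((LieAlgebra.ad ℂ g (D.f j₀)) ^ k) := (commute_ad hb).pow_pow _ _
        calc ((LieAlgebra.ad ℂ g (D.f j')) ^ (m j')) (((LieAlgebra.ad ℂ g (D.f j₀)) ^ k) x)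
            = (((LieAlgebra.ad ℂ g (D.f j')) ^ (m j')) *
                ((LieAlgebra.ad ℂ g (D.f j₀)) ^ k)) x := (Module.End.mul_apply _ _ _).symm
          _ = (((LieAlgebra.ad ℂ g (D.f j₀)) ^ k) *
                ((LieAlgebra.ad ℂ g (D.f j')) ^ (m j'))) x := by rw [hC]
          _ = ((LieAlgebra.ad ℂ g (D.f j₀)) ^ k)
                (((LieAlgebra.ad ℂ g (D.f j')) ^ (m j')) x) := Module.End.mul_apply _ _ _
          _ = 0 := by rw [hser j' (hmemt _ hj'), map_zero]
      obtain ⟨u, hu, hequ⟩ := ih ht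
        (fun a ha b hb hne => hcomm a (hmemt _ ha) b (hmemt _ hb) hne)
        (fun a ha => hcd a (hmemt _ ha)) y hymem hsery
      have hdje : d j₀ ≤ e := by have := hcd j₀ hmemj; omega
      have hcomP : Commute (UniversalEnvelopingAlgebra.ι ℂ (D.f j₀) ^ (e - d j₀))
          (t.map fun j => UniversalEnvelopingAlgebra.ι ℂ (D.f j) ^ d j).prod := by
        refine Commute.pow_left ?_ _
        refine Commute.list_prod_right _ _ ?_
        intro w hw
        obtain ⟨j', hj', rfl⟩ := List.mem_map.mp hw
        have hne : j₀ ≠ j' := fun hh => hjt (hh ▸ hj')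
        exact (commute_F D (hcomm j₀ hmemj j' (hmemt _ hj') hne)).pow_right _
      refine ⟨u * UniversalEnvelopingAlgebra.ι ℂ (D.f j₀) ^ (e - d j₀),
        (Subalgebra.mem_toSubmodule _).mpr
          (mul_mem hu (pow_mem (iota_f_mem D j₀) _)), ?_⟩
      rw [LinearMap.mulRight_apply]
      have hFe : UniversalEnvelopingAlgebra.ι ℂ (D.f j₀) ^ e
          = UniversalEnvelopingAlgebra.ι ℂ (D.f j₀) ^ (e - d j₀) *
            UniversalEnvelopingAlgebra.ι ℂ (D.f j₀) ^ d j₀ := by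
        rw [← pow_add, Nat.sub_add_cancel hdje]
      calc u * UniversalEnvelopingAlgebra.ι ℂ (D.f j₀) ^ (e - d j₀) *
            ((t.map fun j => UniversalEnvelopingAlgebra.ι ℂ (D.f j) ^ d j).prod *
              UniversalEnvelopingAlgebra.ι ℂ (D.f j₀) ^ d j₀)
          = u * (UniversalEnvelopingAlgebra.ι ℂ (D.f j₀) ^ (e - d j₀) *
              (t.map fun j => UniversalEnvelopingAlgebra.ι ℂ (D.f j) ^ d j).prod) *
              UniversalEnvelopingAlgebra.ι ℂ (D.f j₀) ^ d j₀ := by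
            rw [mul_assoc, mul_assoc, mul_assoc]
        _ = u * ((t.map fun j => UniversalEnvelopingAlgebra.ι ℂ (D.f j) ^ d j).prod *
              UniversalEnvelopingAlgebra.ι ℂ (D.f j₀) ^ (e - d j₀)) *
              UniversalEnvelopingAlgebra.ι ℂ (D.f j₀) ^ d j₀ := by rw [hcomP.eq]
        _ = (u * (t.map fun j => UniversalEnvelopingAlgebra.ι ℂ (D.f j) ^ d j).prod) *
              (UniversalEnvelopingAlgebra.ι ℂ (D.f j₀) ^ (e - d j₀) *
                UniversalEnvelopingAlgebra.ι ℂ (D.f j₀) ^ d j₀) := by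
            rw [mul_assoc, mul_assoc, mul_assoc]
        _ = (u * (t.map fun j => UniversalEnvelopingAlgebra.ι ℂ (D.f j) ^ d j).prod) *
              UniversalEnvelopingAlgebra.ι ℂ (D.f j₀) ^ e := by rw [← hFe]
        _ = ((t.map fun j => UniversalEnvelopingAlgebra.ι ℂ (D.f j) ^ c j).prod *
              UniversalEnvelopingAlgebra.ι ℂ y) *
              UniversalEnvelopingAlgebra.ι ℂ (D.f j₀) ^ e := by rw [← hequ]
        _ = (t.map fun j => UniversalEnvelopingAlgebra.ι ℂ (D.f j) ^ c j).prod *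
              (UniversalEnvelopingAlgebra.ι ℂ y *
                UniversalEnvelopingAlgebra.ι ℂ (D.f j₀) ^ e) := by rw [mul_assoc]
    · show (t.map fun j => UniversalEnvelopingAlgebra.ι ℂ (D.f j) ^ c j).prod * 0 ∈ _
      rw [mul_zero]; exact zero_mem _
    · intro y z _ _ hy hz
      show (t.map fun j => UniversalEnvelopingAlgebra.ι ℂ (D.f j) ^ c j).prod * (y + z) ∈ _
      rw [mul_add]; exact add_mem hy hz
    · intro r y _ hy
      show (t.map fun j => UniversalEnvelopingAlgebra.ι ℂ (D.f j) ^ c j).prod * (r • y) ∈ _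
      rw [mul_smul_comm]; exact Submodule.smul_mem _ _ hy

private lemma powStep (D : Data 𝓘 g) (m : 𝓘 → ℕ) (l : List 𝓘) (hl : l.Nodup)
    (hcomm : ∀ j ∈ l, ∀ k ∈ l, j ≠ k → ⁅D.f j, D.f k⁆ = 0)
    (x : g) (hx : UniversalEnvelopingAlgebra.ι ℂ x ∈ negPart D)
    (hser : ∀ j ∈ l, ((LieAlgebra.ad ℂ g (D.f j)) ^ (m j)) x = 0) :
    ∀ (N : ℕ) (c : 𝓘 → ℕ), (∀ j ∈ l, N * (m j - 1) ≤ c j) →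
    ∃ u ∈ negPart D,
      (l.map fun j => UniversalEnvelopingAlgebra.ι ℂ (D.f j) ^ c j).prod *
          (UniversalEnvelopingAlgebra.ι ℂ x) ^ N
        = u * (l.map fun j =>
            UniversalEnvelopingAlgebra.ι ℂ (D.f j) ^ (c j - N * (m j - 1))).prod := by
  intro N
  induction N with
  | zero =>
    intro c hc
    exact ⟨1, one_mem _, by simp⟩
  | succ N ihN =>
    intro c hc
    set d : 𝓘 → ℕ := fun j => c j - (m j - 1) with hd
    have hsm : ∀ j, (N + 1) * (m j - 1) = N * (m j - 1) + (m j - 1) := by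
      intro j; ring
    have hcd : ∀ j ∈ l, c j = d j + (m j - 1) := by
      intro j hj
      have h1 := hc j hj
      have h2 : m j - 1 ≤ (N + 1) * (m j - 1) :=
        Nat.le_mul_of_pos_left _ (Nat.succ_pos N)
      simp only [hd]; omega
    obtain ⟨u1, hu1, h1⟩ := listStep D m c d l hl hcomm hcd x hx hser
    obtain ⟨u2, hu2, h2⟩ := ihN d (fun j hj => by
      have := hc j hj; rw [hsm j] at this; simp only [hd]; omega)
    refine ⟨u1 * u2, mul_mem hu1 hu2, ?_⟩
    have hexp : ∀ j ∈ l, d j - N * (m j - 1) = c j - (N + 1) * (m j - 1) := by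
      intro j hj
      have := hc j hj; rw [hsm j] at this ⊢; simp only [hd]; omega
    have hmapeq : (l.map fun j =>
        UniversalEnvelopingAlgebra.ι ℂ (D.f j) ^ (d j - N * (m j - 1))).prod
        = (l.map fun j =>
        UniversalEnvelopingAlgebra.ι ℂ (D.f j) ^ (c j - (N + 1) * (m j - 1))).prod := by
      congr 1
      exact List.map_congr_left (fun j hj => by rw [hexp j hj])
    calc (l.map fun j => UniversalEnvelopingAlgebra.ι ℂ (D.f j) ^ c j).prod *
          (UniversalEnvelopingAlgebra.ι ℂ x) ^ (N + 1)
        = ((l.map fun j => UniversalEnvelopingAlgebra.ι ℂ (D.f j) ^ c j).prod *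
          UniversalEnvelopingAlgebra.ι ℂ x) * (UniversalEnvelopingAlgebra.ι ℂ x) ^ N := by
          rw [pow_succ', ← mul_assoc]
      _ = u1 * ((l.map fun j => UniversalEnvelopingAlgebra.ι ℂ (D.f j) ^ d j).prod *
          (UniversalEnvelopingAlgebra.ι ℂ x) ^ N) := by rw [h1, mul_assoc]
      _ = u1 * (u2 * (l.map fun j =>
          UniversalEnvelopingAlgebra.ι ℂ (D.f j) ^ (d j - N * (m j - 1))).prod) := by
          rw [h2]
      _ = (u1 * u2) * (l.map fun j =>
          UniversalEnvelopingAlgebra.ι ℂ (D.f j) ^ (c j - (N + 1) * (m j - 1))).prod := by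
          rw [hmapeq, mul_assoc]

end KMaux

/-- Lemma 5.4: for `N ∈ ℤ≥0`, `i ∈ 𝓘` and an independent subset
`J ⊆ 𝓘` with `⟨α_i, α_j^∨⟩ ≤ 0` for `j ∈ J`, and integers `c_j > −N⟨α_i, α_j^∨⟩`, one
has, in `U(g)`:  `(∏_{j∈J} f_j^{c_j})·f_i^N ∈ U(n⁻)·(∏_{j∈J} f_j^{c_j+N⟨α_i,α_j^∨⟩})`.
(The set `J` is enumerated by a list `l`; the products are unambiguous since the `f_j`,
`j ∈ J`, pairwise commute.) -/
theorem serre_straightening_lemma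
    {𝓘 : Type} [Fintype 𝓘] [DecidableEq 𝓘] {g : Type} [LieRing g] [LieAlgebra ℂ g]
    (D : Data 𝓘 g) (N : ℕ) (i : 𝓘) (J : Set 𝓘)
    (hJind : IndepSet D J)
    (hneg : ∀ j ∈ J, D.A j i ≤ 0)
    (c : 𝓘 → ℕ) (hc : ∀ j ∈ J, -((N : ℤ) * D.A j i) < (c j : ℤ))
    (l : List 𝓘) (hl : l.Nodup) (hlJ : ∀ j : 𝓘, j ∈ l ↔ j ∈ J) :
    ∃ u ∈ Algebra.adjoin ℂ (Set.range fun k => UniversalEnvelopingAlgebra.ι ℂ (D.f k)),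
      (l.map fun j => UniversalEnvelopingAlgebra.ι ℂ (D.f j) ^ (c j)).prod *
          UniversalEnvelopingAlgebra.ι ℂ (D.f i) ^ N =
        u * (l.map fun j =>
          UniversalEnvelopingAlgebra.ι ℂ (D.f j) ^ ((c j : ℤ) + (N : ℤ) * D.A j i).toNat).prod := by
  classical
  have hiJ : i ∉ J := by
    intro hij
    have h1 := hneg i hij
    have h2 := D.A_diag i
    omega
  set m : 𝓘 → ℕ := fun j => (1 - D.A j i).toNat with hm
  have hcomm : ∀ j ∈ l, ∀ k ∈ l, j ≠ k → ⁅D.f j, D.f k⁆ = 0 := by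
    intro j hj k hk hne
    have hj' : j ∈ J := (hlJ j).mp hj
    have hk' : k ∈ J := (hlJ k).mp hk
    have h0 : D.α j (D.coroot k) = 0 := hJind j hj' k hk' hne
    rw [D.pairing_eq] at h0
    have h1 : D.A k j = 0 := by exact_mod_cast h0
    have h2 : D.A j k = 0 := (D.A_zero_iff k j).mp h1
    have h3 := D.serre_f j k hne
    rw [h2] at h3
    simp only [sub_zero, Int.toNat_one, pow_one, LieAlgebra.ad_apply] at h3
    exact h3
  have hser : ∀ j ∈ l, ((LieAlgebra.ad ℂ g (D.f j)) ^ (m j)) (D.f i) = 0 := by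
    intro j hj
    have hne : j ≠ i := fun hh => hiJ (hh ▸ (hlJ j).mp hj)
    exact D.serre_f j i hne
  have hx : UniversalEnvelopingAlgebra.ι ℂ (D.f i) ∈ negPart D := iota_f_mem D i
  have hB : ∀ j ∈ l, ∃ B : ℕ, D.A j i = -(B : ℤ) := by
    intro j hj
    have hA := hneg j ((hlJ j).mp hj)
    exact ⟨(-(D.A j i)).toNat, by omega⟩
  have hNc : ∀ j ∈ l, N * (m j - 1) ≤ c j := by
    intro j hj
    obtain ⟨B, hBj⟩ := hB j hj
    have hmjB : m j = B + 1 := by simp only [hm]; rw [hBj]; omega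
    rw [hmjB]
    simp only [Nat.add_sub_cancel]
    have hcj := hc j ((hlJ j).mp hj)
    rw [hBj, mul_neg, neg_neg] at hcj
    have : ((N * B : ℕ) : ℤ) < (c j : ℤ) := by push_cast; exact hcj
    exact_mod_cast this.le
  obtain ⟨u, hu, hequ⟩ := powStep D m l hl hcomm (D.f i) hx hser N c hNc
  refine ⟨u, hu, ?_⟩
  rw [hequ]
  congr 1
  congr 1
  refine List.map_congr_left (fun j hj => ?_)
  obtain ⟨B, hBj⟩ := hB j hj
  have hmjB : m j = B + 1 := by simp only [hm]; rw [hBj]; omega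
  have hNBc : N * B ≤ c j := by
    have h := hNc j hj
    rw [hmjB] at h
    simpa using h
  rw [hmjB, hBj]
  simp only [Nat.add_sub_cancel]
  have h7 : (c j : ℤ) + (N : ℤ) * -(B : ℤ) = (c j : ℤ) - ((N * B : ℕ) : ℤ) := by
    push_cast; ring
  rw [h7]
  congr 1
  omega


end KM
end
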